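/- For every x ∈ [0,1], if U is uniform on [0,1] and B is a Bernoulli(1/8) random variable independent of U, then the random variable B·U/4 + (1−B)·G_x^{−1}(U) has the same distribution as U·x + U·(1−U); that is, the update function Φ'(x, b, u) = b·u/4 + (1−b)·G_x^{−1}(u) generates the Markov kernel whose transition law from state x is the law of U·x + U·(1−U). -/

import Mathlib

open MeasureTheory

/-- The distribution function `F_x` of `U·x + U·(1−U)` for `U` uniform on `[0,1]`. -/
noncomputable def F (x y : ℝ) : ℝ :=
  if y < x then (1 + x - Real.sqrt ((1 + x) ^ 2 - 4 * y)) / 2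
  else if y < ((1 + x) / 2) ^ 2 then 1 - Real.sqrt ((1 + x) ^ 2 - 4 * y)
  else 1

/-- `G_x(y) = (8/7)·(F_x(y) − (1/2)·min(y, 1/4))`. -/
noncomputable def G (x y : ℝ) : ℝ := 8 / 7 * (F x y - (1 / 2) * min y (1 / 4))

/-- The quantile function (generalized inverse) `G_x^{−1} : [0,1] → [0,1]` of the
distribution with CDF `G_x`. -/
noncomputable def Ginv (x z : ℝ) : ℝ := sInf {y ∈ Set.Icc (0:ℝ) 1 | z ≤ G x y}

/-- The Bernoulli(1/8) distribution on `ℝ` (value `1` with probability `1/8`,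
value `0` with probability `7/8`). -/
noncomputable def bern : Measure ℝ :=
  (1 / 8 : ENNReal) • Measure.dirac (1:ℝ) + (7 / 8 : ENNReal) • Measure.dirac (0:ℝ)

open Set

section Aux

variable {x y y1 y2 u : ℝ}

lemma sqrt_diff_ge (hx0 : 0 ≤ x) (hx1 : x ≤ 1) (h0 : 0 ≤ y1) (h12 : y1 ≤ y2)
    (h2 : 4 * y2 ≤ (1 + x) ^ 2) :
    y2 - y1 ≤ Real.sqrt ((1 + x) ^ 2 - 4 * y1) - Real.sqrt ((1 + x) ^ 2 - 4 * y2) := by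
  set s1 := (1 + x) ^ 2 - 4 * y1 with hs1def
  set s2 := (1 + x) ^ 2 - 4 * y2 with hs2def
  have hs2 : 0 ≤ s2 := by simp [hs2def]; linarith
  have hs12 : s2 ≤ s1 := by simp [hs1def, hs2def]; linarith
  have ht12 : Real.sqrt s2 ≤ Real.sqrt s1 := Real.sqrt_le_sqrt hs12
  have e1 : Real.sqrt s1 ^ 2 = s1 := Real.sq_sqrt (le_trans hs2 hs12)
  have e2 : Real.sqrt s2 ^ 2 = s2 := Real.sq_sqrt hs2
  have h1le : Real.sqrt s1 ≤ 2 := by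
    have h4 : s1 ≤ 2 ^ 2 := by simp [hs1def]; nlinarith
    have := Real.sqrt_le_sqrt h4
    rwa [Real.sqrt_sq (by norm_num : (0:ℝ) ≤ 2)] at this
  have hnn : 0 ≤ Real.sqrt s2 := Real.sqrt_nonneg s2
  nlinarith [mul_nonneg (sub_nonneg.2 ht12) (sub_nonneg.2 (le_trans (by linarith : Real.sqrt s1 + Real.sqrt s2 ≤ 4) le_rfl))]

lemma F_of_lt (h : y < x) : F x y = (1 + x - Real.sqrt ((1 + x) ^ 2 - 4 * y)) / 2 := by
  rw [F, if_pos h]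

lemma F_of_ge (hxy : x ≤ y) (hyb : 4 * y ≤ (1 + x) ^ 2) :
    F x y = 1 - Real.sqrt ((1 + x) ^ 2 - 4 * y) := by
  rw [F, if_neg (not_lt.2 hxy)]
  by_cases h : y < ((1 + x) / 2) ^ 2
  · rw [if_pos h]
  · rw [if_neg h]
    push_neg at h
    have h0 : (1 + x) ^ 2 - 4 * y = 0 := by nlinarith
    rw [h0, Real.sqrt_zero]; ring

lemma F_top (hx0 : 0 ≤ x) (h : (1 + x) ^ 2 ≤ 4 * y) : F x y = 1 := by
  rw [F, if_neg, if_neg]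
  · push_neg; nlinarith
  · push_neg; nlinarith [sq_nonneg (1 - x)]

lemma F_nonneg (hx0 : 0 ≤ x) (hx1 : x ≤ 1) (hy : 0 ≤ y) : 0 ≤ F x y := by
  rw [F]; split_ifs with h1 h2
  · have hle : Real.sqrt ((1 + x) ^ 2 - 4 * y) ≤ 1 + x := by
      have := Real.sqrt_le_sqrt (by linarith : (1 + x) ^ 2 - 4 * y ≤ (1 + x) ^ 2)
      rwa [Real.sqrt_sq (by linarith)] at this
    linarith
  · have hle : Real.sqrt ((1 + x) ^ 2 - 4 * y) ≤ 1 := by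
      have h4 : (1 + x) ^ 2 - 4 * y ≤ 1 ^ 2 := by push_neg at h1; nlinarith
      have := Real.sqrt_le_sqrt h4
      rwa [Real.sqrt_sq (by norm_num : (0:ℝ) ≤ 1)] at this
    linarith
  · norm_num

lemma F_le_one (hx0 : 0 ≤ x) (hx1 : x ≤ 1) : F x y ≤ 1 := by
  rw [F]; split_ifs with h1 h2
  · have := Real.sqrt_nonneg ((1 + x) ^ 2 - 4 * y); linarith
  · have := Real.sqrt_nonneg ((1 + x) ^ 2 - 4 * y); linarith
  · exact le_rfl

lemma F_lip (hx0 : 0 ≤ x) (hx1 : x ≤ 1) (h0 : 0 ≤ y1) (h12 : y1 ≤ y2)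
    (h2 : 4 * y2 ≤ (1 + x) ^ 2) : (y2 - y1) / 2 ≤ F x y2 - F x y1 := by
  have hsqx : Real.sqrt ((1 + x) ^ 2 - 4 * x) = 1 - x := by
    rw [show (1 + x) ^ 2 - 4 * x = (1 - x) ^ 2 by ring, Real.sqrt_sq (by linarith)]
  rcases lt_or_ge y2 x with hy2 | hy2
  · rw [F_of_lt hy2, F_of_lt (lt_of_le_of_lt h12 hy2)]
    have := sqrt_diff_ge hx0 hx1 h0 h12 h2; linarith
  · rcases lt_or_ge y1 x with hy1 | hy1
    · have hxb : 4 * x ≤ (1 + x) ^ 2 := by nlinarith [sq_nonneg (1 - x)]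
      rw [F_of_ge hy2 h2, F_of_lt hy1]
      have d1 := sqrt_diff_ge hx0 hx1 h0 hy1.le hxb
      have d2 := sqrt_diff_ge hx0 hx1 hx0 hy2 h2
      rw [hsqx] at d1 d2
      linarith
    · rw [F_of_ge hy2 h2, F_of_ge hy1 (by linarith)]
      have := sqrt_diff_ge hx0 hx1 h0 h12 h2; linarith

lemma F_mono (hx0 : 0 ≤ x) (hx1 : x ≤ 1) (h0 : 0 ≤ y1) (h12 : y1 ≤ y2) :
    F x y1 ≤ F x y2 := by
  rcases le_or_gt (4 * y2) ((1 + x) ^ 2) with h | h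
  · have := F_lip hx0 hx1 h0 h12 h; linarith
  · rw [F_top hx0 h.le]; exact F_le_one hx0 hx1

lemma G_zero (hx0 : 0 ≤ x) (hx1 : x ≤ 1) : G x 0 = 0 := by
  have hF : F x 0 = 0 := by
    rcases lt_or_ge (0:ℝ) x with h | h
    · rw [F_of_lt h, show (1 + x) ^ 2 - 4 * 0 = (1 + x) ^ 2 by ring,
        Real.sqrt_sq (by linarith)]
      ring
    · have hx : x = 0 := le_antisymm h hx0
      subst hx
      rw [F_of_ge le_rfl (by norm_num)]
      norm_num
  rw [G, hF]
  norm_num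

lemma G_one (hx0 : 0 ≤ x) (hx1 : x ≤ 1) : G x 1 = 1 := by
  have hF : F x 1 = 1 := by
    rw [F, if_neg (not_lt.2 hx1), if_neg]
    push_neg; nlinarith
  rw [G, hF, min_eq_right (by norm_num : (1/4 : ℝ) ≤ 1)]
  norm_num

lemma G_top (hx0 : 0 ≤ x) (h : (1 + x) ^ 2 ≤ 4 * y) : G x y = 1 := by
  rw [G, F_top hx0 h, min_eq_right (by nlinarith : (1/4 : ℝ) ≤ y)]
  norm_num

lemma G_mono (hx0 : 0 ≤ x) (hx1 : x ≤ 1) (h0 : 0 ≤ y1) (h12 : y1 ≤ y2) (h2 : y2 ≤ 1) :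
    G x y1 ≤ G x y2 := by
  rw [G, G]
  have key : (min y2 (1/4) - min y1 (1/4)) / 2 ≤ F x y2 - F x y1 := by
    rcases le_or_gt y2 (1/4) with h | h
    · rw [min_eq_left h, min_eq_left (le_trans h12 h)]
      exact F_lip hx0 hx1 h0 h12 (by nlinarith)
    · rcases le_or_gt (1/4 : ℝ) y1 with h' | h'
      · rw [min_eq_right h.le, min_eq_right h']
        have := F_mono hx0 hx1 h0 h12; linarith
      · rw [min_eq_right h.le, min_eq_left h'.le]
        have l1 := F_lip hx0 hx1 h0 h'.le (by nlinarith)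
        have l2 := F_mono hx0 hx1 (by norm_num : (0:ℝ) ≤ 1/4) h.le
        linarith
  linarith

lemma G_nonneg (hx0 : 0 ≤ x) (hx1 : x ≤ 1) (h0 : 0 ≤ y) : 0 ≤ G x y := by
  rcases le_or_gt y 1 with h | h
  · have := G_mono hx0 hx1 le_rfl h0 h
    rwa [G_zero hx0 hx1] at this
  · rw [G_top hx0 (by nlinarith)]; norm_num

lemma G_le_one (hx0 : 0 ≤ x) (hx1 : x ≤ 1) (h0 : 0 ≤ y) : G x y ≤ 1 := by
  rcases le_or_gt y 1 with h | h
  · have := G_mono hx0 hx1 h0 h le_rfl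
    rwa [G_one hx0 hx1] at this
  · rw [G_top hx0 (by nlinarith)]

lemma F_cont (hx0 : 0 ≤ x) (hx1 : x ≤ 1) : Continuous (F x) := by
  have hsq : Continuous fun y : ℝ => Real.sqrt ((1 + x) ^ 2 - 4 * y) :=
    Real.continuous_sqrt.comp (by continuity)
  have h2 : Continuous fun y : ℝ =>
      (if y < ((1 + x) / 2) ^ 2 then 1 - Real.sqrt ((1 + x) ^ 2 - 4 * y) else 1) := by
    apply Continuous.if ?_ (continuous_const.sub hsq) continuous_const
    intro a ha
    rw [show {y : ℝ | y < ((1 + x) / 2) ^ 2} = Set.Iio (((1 + x) / 2) ^ 2) from rfl,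
      frontier_Iio] at ha
    rw [mem_singleton_iff] at ha
    rw [ha]
    simp only [Pi.sub_apply]
    rw [show (1 + x) ^ 2 - 4 * ((1 + x) / 2) ^ 2 = 0 by ring, Real.sqrt_zero]
    norm_num
  have : Continuous fun y : ℝ => if y < x then (1 + x - Real.sqrt ((1 + x) ^ 2 - 4 * y)) / 2
      else if y < ((1 + x) / 2) ^ 2 then 1 - Real.sqrt ((1 + x) ^ 2 - 4 * y) else 1 := by
    apply Continuous.if ?_ ((continuous_const.sub hsq).div_const 2) h2
    intro a ha
    rw [show {y : ℝ | y < x} = Set.Iio x from rfl, frontier_Iio] at ha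
    rw [mem_singleton_iff] at ha
    rw [ha]
    simp only [Pi.sub_apply]
    have hsqx : Real.sqrt ((1 + x) ^ 2 - 4 * x) = 1 - x := by
      rw [show (1 + x) ^ 2 - 4 * x = (1 - x) ^ 2 by ring, Real.sqrt_sq (by linarith)]
    by_cases hb : x < ((1 + x) / 2) ^ 2
    · rw [if_pos hb, hsqx]; ring
    · rw [if_neg hb, hsqx]
      push_neg at hb
      have : x = 1 := by nlinarith
      rw [this]; norm_num
  exact this.congr fun y => by rw [F]

lemma G_cont (hx0 : 0 ≤ x) (hx1 : x ≤ 1) : Continuous (G x) := by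
  have hmin : Continuous fun y : ℝ => min y (1/4) := continuous_id.min continuous_const
  have : Continuous fun y : ℝ => 8 / 7 * (F x y - (1 / 2) * min y (1 / 4)) :=
    continuous_const.mul ((F_cont hx0 hx1).sub (continuous_const.mul hmin))
  exact this.congr fun y => by rw [G]

lemma Ginv_nonneg : 0 ≤ Ginv x u :=
  Real.sInf_nonneg fun y hy => hy.1.1

lemma one_mem_GS (hx0 : 0 ≤ x) (hx1 : x ≤ 1) (hu : u ≤ 1) :
    (1:ℝ) ∈ {y ∈ Set.Icc (0:ℝ) 1 | u ≤ G x y} :=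
  ⟨⟨zero_le_one, le_rfl⟩, by rw [G_one hx0 hx1]; exact hu⟩

lemma GS_bddBelow : BddBelow {y ∈ Set.Icc (0:ℝ) 1 | u ≤ G x y} :=
  ⟨0, fun z hz => hz.1.1⟩

lemma GS_empty_of_gt (hx0 : 0 ≤ x) (hx1 : x ≤ 1) (hu : 1 < u) :
    {y ∈ Set.Icc (0:ℝ) 1 | u ≤ G x y} = ∅ := by
  ext z
  simp only [mem_setOf_eq, mem_Icc, mem_empty_iff_false, iff_false, not_and]
  rintro ⟨h0, h1⟩ h
  have := G_le_one hx0 hx1 h0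
  linarith

lemma Ginv_of_gt (hx0 : 0 ≤ x) (hx1 : x ≤ 1) (hu : 1 < u) : Ginv x u = 0 := by
  rw [Ginv, GS_empty_of_gt hx0 hx1 hu, Real.sInf_empty]

lemma Ginv_le_one (hx0 : 0 ≤ x) (hx1 : x ≤ 1) : Ginv x u ≤ 1 := by
  rcases le_or_gt u 1 with hu | hu
  · exact csInf_le GS_bddBelow (one_mem_GS hx0 hx1 hu)
  · rw [Ginv_of_gt hx0 hx1 hu]; norm_num

lemma Ginv_le_iff (hx0 : 0 ≤ x) (hx1 : x ≤ 1) (hu : u ≤ 1) (hy0 : 0 ≤ y) (hy1 : y ≤ 1) :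
    Ginv x u ≤ y ↔ u ≤ G x y := by
  constructor
  · intro h
    have hne : {y ∈ Set.Icc (0:ℝ) 1 | u ≤ G x y}.Nonempty := ⟨1, one_mem_GS hx0 hx1 hu⟩
    have hcl : IsClosed {y ∈ Set.Icc (0:ℝ) 1 | u ≤ G x y} := by
      have hset : {y ∈ Set.Icc (0:ℝ) 1 | u ≤ G x y} = Set.Icc 0 1 ∩ (G x) ⁻¹' Set.Ici u := by
        ext z; simp [Set.mem_sep_iff, Set.mem_preimage, Set.mem_Ici]
      rw [hset]
      exact isClosed_Icc.inter (isClosed_Ici.preimage (G_cont hx0 hx1))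
    have hmem := hcl.csInf_mem hne GS_bddBelow
    exact le_trans hmem.2 (G_mono hx0 hx1 hmem.1.1 h hy1)
  · intro h
    exact csInf_le GS_bddBelow ⟨⟨hy0, hy1⟩, h⟩

lemma Ginv_measurable (hx0 : 0 ≤ x) (hx1 : x ≤ 1) : Measurable (Ginv x) := by
  apply measurable_of_Iic
  intro y
  rcases lt_or_ge y 0 with hy | hy
  · have hset : Ginv x ⁻¹' Set.Iic y = ∅ := by
      ext u
      simp only [Set.mem_preimage, Set.mem_Iic, mem_empty_iff_false, iff_false, not_le]
      exact lt_of_lt_of_le hy Ginv_nonneg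
    rw [hset]; exact MeasurableSet.empty
  · rcases le_or_gt y 1 with hy1 | hy1
    · have hset : Ginv x ⁻¹' Set.Iic y = Set.Iic (G x y) ∪ Set.Ioi 1 := by
        ext u
        simp only [Set.mem_preimage, Set.mem_Iic, Set.mem_union, Set.mem_Ioi]
        rcases le_or_gt u 1 with hu | hu
        · rw [Ginv_le_iff hx0 hx1 hu hy hy1]
          constructor
          · exact fun h => Or.inl h
          · rintro (h | h)
            · exact h
            · exact absurd h (not_lt.2 hu)
        · rw [Ginv_of_gt hx0 hx1 hu]
          simp [hy, hu]
      rw [hset]; exact measurableSet_Iic.union measurableSet_Ioi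
    · have hset : Ginv x ⁻¹' Set.Iic y = Set.univ := by
        ext u
        simp only [Set.mem_preimage, Set.mem_Iic, Set.mem_univ, iff_true]
        exact le_trans (Ginv_le_one hx0 hx1) hy1.le
      rw [hset]; exact MeasurableSet.univ

end Aux

/-- If `U` is uniform on `[0,1]` and `B` is Bernoulli(1/8) independent of `U`, then
`B·U/4 + (1−B)·G_x^{−1}(U)` has the same distribution as `U·x + U·(1−U)`: the update
function `Φ'(x,b,u) = b·u/4 + (1−b)·G_x^{−1}(u)` generates the Markov kernel whose
transition law from `x` is the law of `U·x + U·(1−U)`. -/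
theorem multigamma_update (x : ℝ) (hx : x ∈ Set.Icc (0:ℝ) 1) :
    Measure.map (fun p : ℝ × ℝ => p.1 * p.2 / 4 + (1 - p.1) * Ginv x p.2)
        (bern.prod (volume.restrict (Set.Icc (0:ℝ) 1)))
      = Measure.map (fun u : ℝ => u * x + u * (1 - u))
          (volume.restrict (Set.Icc (0:ℝ) 1)) := by
  obtain ⟨hx0, hx1⟩ := hx
  have hGm : Measurable (Ginv x) := Ginv_measurable hx0 hx1
  have hΦ : Measurable fun p : ℝ × ℝ => p.1 * p.2 / 4 + (1 - p.1) * Ginv x p.2 :=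
    ((measurable_fst.mul measurable_snd).div_const 4).add
      ((measurable_const.sub measurable_fst).mul (hGm.comp measurable_snd))
  have hg : Measurable fun u : ℝ => u * x + u * (1 - u) := by fun_prop
  haveI hμ₂fin : IsFiniteMeasure (volume.restrict (Set.Icc (0:ℝ) 1)) :=
    ⟨by rw [Measure.restrict_apply_univ, Real.volume_Icc]; exact ENNReal.ofReal_lt_top⟩
  haveI hbernfin : IsFiniteMeasure bern := by
    constructor
    rw [bern]
    simp only [Measure.coe_add, Measure.coe_smul, Pi.add_apply, Pi.smul_apply,
      measure_univ, smul_eq_mul, mul_one]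
    rw [ENNReal.div_add_div_same, show (1 + 7 : ENNReal) = 8 by norm_num,
      ENNReal.div_self (by norm_num) (by norm_num)]
    exact ENNReal.one_lt_top
  haveI : IsFiniteMeasure (bern.prod (volume.restrict (Set.Icc (0:ℝ) 1))) := inferInstance
  haveI : IsFiniteMeasure
      (Measure.map (fun p : ℝ × ℝ => p.1 * p.2 / 4 + (1 - p.1) * Ginv x p.2)
        (bern.prod (volume.restrict (Set.Icc (0:ℝ) 1)))) :=
    Measure.isFiniteMeasure_map _ _
  refine Measure.ext_of_Iic _ _ fun y => ?_
  rw [Measure.map_apply hΦ measurableSet_Iic, Measure.map_apply hg measurableSet_Iic,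
    Measure.prod_apply (hΦ measurableSet_Iic)]
  have hmeaskernel : Measurable fun a : ℝ =>
      (volume.restrict (Set.Icc (0:ℝ) 1))
        (Prod.mk a ⁻¹' ((fun p : ℝ × ℝ => p.1 * p.2 / 4 + (1 - p.1) * Ginv x p.2) ⁻¹' Set.Iic y)) :=
    measurable_measure_prodMk_left (hΦ measurableSet_Iic)
  rw [bern, lintegral_add_measure, lintegral_smul_measure, lintegral_smul_measure,
    lintegral_dirac' _ hmeaskernel, lintegral_dirac' _ hmeaskernel]
  have e1 : Prod.mk (1:ℝ) ⁻¹' ((fun p : ℝ × ℝ => p.1 * p.2 / 4 + (1 - p.1) * Ginv x p.2) ⁻¹'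
      Set.Iic y) = Set.Iic (4 * y) := by
    ext u
    simp only [Set.mem_preimage, Set.mem_Iic]
    constructor <;> intro h <;> nlinarith [h]
  have e0 : Prod.mk (0:ℝ) ⁻¹' ((fun p : ℝ × ℝ => p.1 * p.2 / 4 + (1 - p.1) * Ginv x p.2) ⁻¹'
      Set.Iic y) = Ginv x ⁻¹' Set.Iic y := by
    ext u
    simp only [Set.mem_preimage, Set.mem_Iic]
    constructor <;> intro h <;> nlinarith [h]
  rw [e1, e0, Measure.restrict_apply measurableSet_Iic,
    Measure.restrict_apply (hGm measurableSet_Iic),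
    Measure.restrict_apply (hg measurableSet_Iic)]
  rcases lt_or_ge y 0 with hy | hy
  · have A : Set.Iic (4 * y) ∩ Set.Icc (0:ℝ) 1 = ∅ := by
      rw [Set.eq_empty_iff_forall_notMem]
      rintro u ⟨h1, h2, h3⟩
      rw [Set.mem_Iic] at h1
      linarith
    have B : Ginv x ⁻¹' Set.Iic y ∩ Set.Icc (0:ℝ) 1 = ∅ := by
      rw [Set.eq_empty_iff_forall_notMem]
      rintro u ⟨h1, h2, h3⟩
      rw [Set.mem_preimage, Set.mem_Iic] at h1
      linarith [Ginv_nonneg (x := x) (u := u)]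
    have C : (fun u : ℝ => u * x + u * (1 - u)) ⁻¹' Set.Iic y ∩ Set.Icc (0:ℝ) 1 = ∅ := by
      rw [Set.eq_empty_iff_forall_notMem]
      rintro u ⟨h1, h2, h3⟩
      rw [Set.mem_preimage, Set.mem_Iic] at h1
      nlinarith [mul_nonneg h2 hx0, mul_nonneg h2 (by linarith : (0:ℝ) ≤ 1 - u)]
    rw [A, B, C]
    simp
  · -- y ≥ 0
    have hA : Set.Iic (4 * y) ∩ Set.Icc (0:ℝ) 1 = Set.Icc 0 (min 1 (4 * y)) := by
      ext u
      simp only [Set.mem_inter_iff, Set.mem_Iic, Set.mem_Icc, le_min_iff]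
      tauto
    have hB : Ginv x ⁻¹' Set.Iic y ∩ Set.Icc (0:ℝ) 1 = Set.Icc 0 (G x y) := by
      ext u
      simp only [Set.mem_inter_iff, Set.mem_preimage, Set.mem_Iic, Set.mem_Icc]
      constructor
      · rintro ⟨h, h0, h1⟩
        refine ⟨h0, ?_⟩
        rcases le_or_gt y 1 with hy1 | hy1
        · exact (Ginv_le_iff hx0 hx1 h1 hy hy1).1 h
        · rw [G_top hx0 (by nlinarith)]; exact h1
      · rintro ⟨h0, h1⟩
        have hG1 : G x y ≤ 1 := G_le_one hx0 hx1 hy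
        refine ⟨?_, h0, le_trans h1 hG1⟩
        rcases le_or_gt y 1 with hy1 | hy1
        · exact (Ginv_le_iff hx0 hx1 (le_trans h1 hG1) hy hy1).2 h1
        · exact le_trans (Ginv_le_one hx0 hx1) hy1.le
    have hC : volume ((fun u : ℝ => u * x + u * (1 - u)) ⁻¹' Set.Iic y ∩ Set.Icc (0:ℝ) 1)
        = ENNReal.ofReal (F x y) := by
      rcases le_or_gt ((1 + x) ^ 2) (4 * y) with hbig | hsmall
      · have hset : (fun u : ℝ => u * x + u * (1 - u)) ⁻¹' Set.Iic y ∩ Set.Icc (0:ℝ) 1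
            = Set.Icc 0 1 := by
          rw [Set.inter_eq_right]
          rintro u ⟨h0, h1⟩
          rw [Set.mem_preimage, Set.mem_Iic]
          nlinarith [sq_nonneg (u - (1 + x) / 2)]
        rw [hset, Real.volume_Icc, F_top hx0 hbig, sub_zero]
      · have hs : 0 < (1 + x) ^ 2 - 4 * y := by linarith
        have ht0 : 0 ≤ Real.sqrt ((1 + x) ^ 2 - 4 * y) := Real.sqrt_nonneg _
        have ht2 : Real.sqrt ((1 + x) ^ 2 - 4 * y) ^ 2 = (1 + x) ^ 2 - 4 * y :=
          Real.sq_sqrt hs.le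
        set t := Real.sqrt ((1 + x) ^ 2 - 4 * y) with htdef
        have htc : t ≤ 1 + x := by
          have h := Real.sqrt_le_sqrt (by linarith : (1 + x) ^ 2 - 4 * y ≤ (1 + x) ^ 2)
          rwa [Real.sqrt_sq (by linarith)] at h
        rcases lt_or_ge y x with hyx | hxy
        · -- first branch : 0 ≤ y < x
          have ht1x : 1 - x < t := by
            have h1 : (1 - x) ^ 2 < t ^ 2 := by rw [ht2]; nlinarith
            nlinarith
          have hset : (fun u : ℝ => u * x + u * (1 - u)) ⁻¹' Set.Iic y ∩ Set.Icc (0:ℝ) 1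
              = Set.Icc 0 ((1 + x - t) / 2) := by
            ext u
            simp only [Set.mem_inter_iff, Set.mem_preimage, Set.mem_Iic, Set.mem_Icc]
            constructor
            · rintro ⟨hgu, h0, h1u⟩
              refine ⟨h0, ?_⟩
              by_contra hcon
              push_neg at hcon
              have h2 : u < (1 + x + t) / 2 := by linarith
              nlinarith [mul_pos (sub_pos.mpr hcon) (sub_pos.mpr h2)]
            · rintro ⟨h0, hu⟩
              have h1u : u ≤ 1 := by linarith
              refine ⟨?_, h0, h1u⟩
              have f1 : 0 ≤ 1 + x - t - 2 * u := by linarith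
              have f2 : 0 ≤ 1 + x + t - 2 * u := by linarith
              nlinarith [mul_nonneg f1 f2]
          rw [hset, Real.volume_Icc, F_of_lt hyx, ← htdef, sub_zero]
        · -- second branch : x ≤ y, 4y < (1+x)^2
          have ht1x : t ≤ 1 - x := by
            have h := Real.sqrt_le_sqrt (by nlinarith : (1 + x) ^ 2 - 4 * y ≤ (1 - x) ^ 2)
            rwa [Real.sqrt_sq (by linarith)] at h
          have ht0' : 0 < t := Real.sqrt_pos.2 hs
          have hset : (fun u : ℝ => u * x + u * (1 - u)) ⁻¹' Set.Iic y ∩ Set.Icc (0:ℝ) 1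
              = Set.Icc 0 ((1 + x - t) / 2) ∪ Set.Icc ((1 + x + t) / 2) 1 := by
            ext u
            simp only [Set.mem_inter_iff, Set.mem_preimage, Set.mem_Iic, Set.mem_Icc,
              Set.mem_union]
            constructor
            · rintro ⟨hgu, h0, h1⟩
              rcases le_or_gt u ((1 + x) / 2) with hu | hu
              · left
                refine ⟨h0, ?_⟩
                nlinarith [hgu, ht2, hu, ht0]
              · right
                refine ⟨?_, h1⟩
                nlinarith [hgu, ht2, hu, ht0]
            · rintro (⟨h0, hu⟩ | ⟨hu, h1⟩)
              · refine ⟨?_, h0, by linarith⟩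
                have f1 : 0 ≤ 1 + x - t - 2 * u := by linarith
                have f2 : 0 ≤ 1 + x + t - 2 * u := by linarith
                nlinarith [mul_nonneg f1 f2]
              · refine ⟨?_, by linarith, h1⟩
                have f1 : 0 ≤ 2 * u - (1 + x) - t := by linarith
                have f2 : 0 ≤ 2 * u - (1 + x) + t := by linarith
                nlinarith [mul_nonneg f1 f2]
          have hdisj : Disjoint (Set.Icc (0:ℝ) ((1 + x - t) / 2))
              (Set.Icc ((1 + x + t) / 2) 1) := by
            apply Set.disjoint_left.mpr
            rintro u ⟨_, hu1⟩ ⟨hu2, _⟩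
            linarith
          rw [hset, measure_union hdisj measurableSet_Icc, Real.volume_Icc, Real.volume_Icc,
            ← ENNReal.ofReal_add (by linarith) (by linarith), F_of_ge hxy hsmall.le, ← htdef]
          congr 1
          ring
    rw [hA, hB, hC, Real.volume_Icc, Real.volume_Icc, sub_zero, sub_zero]
    have hmin0 : 0 ≤ min 1 (4 * y) := le_min (by norm_num) (by linarith)
    have hG0 : 0 ≤ G x y := G_nonneg hx0 hx1 hy
    have h8 : (1 / 8 : ENNReal) = ENNReal.ofReal (1 / 8) := by
      rw [ENNReal.ofReal_div_of_pos (by norm_num), ENNReal.ofReal_one, ENNReal.ofReal_ofNat]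
    have h78 : (7 / 8 : ENNReal) = ENNReal.ofReal (7 / 8) := by
      rw [ENNReal.ofReal_div_of_pos (by norm_num), ENNReal.ofReal_ofNat, ENNReal.ofReal_ofNat]
    simp only [smul_eq_mul]
    rw [h8, h78, ← ENNReal.ofReal_mul (by norm_num), ← ENNReal.ofReal_mul (by norm_num),
      ← ENNReal.ofReal_add (by positivity) (by positivity)]
    congr 1
    rw [G]
    rcases le_total y (1/4 : ℝ) with hq | hq
    · rw [min_eq_right (by linarith : 4 * y ≤ 1), min_eq_left hq]
      ring
    · rw [min_eq_left (by linarith : (1:ℝ) ≤ 4 * y), min_eq_right hq]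
      ring
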